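/- Let (X(t), Y(t), Λ(t)) be a C¹ solution of the high-resolution ODE system F^T G Ẏ = F^T Λ + ∇f(X), 0 = G^T Λ + ∇g(Y), s² Λ̇ = FX + GY − h, where f, g are convex and differentiable and (x⋆, y⋆, λ⋆) is a saddle point of the Lagrangian (so Fx⋆ + Gy⋆ = h, ∇f(x⋆) = −F^T λ⋆, ∇g(y⋆) = −G^T λ⋆). Then the Lyapunov function E(t) = (1/2s)‖G(Y(t) − y⋆)‖² + (s/2)‖Λ(t) − λ⋆‖² is nonincreasing in t. -/

import Mathlib

open ContinuousLinearMap

local notation "⟪" x ", " y "⟫" => @inner ℝ _ _ x y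

/-- Gradient monotonicity for a convex differentiable function. -/
lemma grad_mono_of_convex {E : Type*} [NormedAddCommGroup E] [InnerProductSpace ℝ E]
    [CompleteSpace E] {f : E → ℝ} {f' : E → E} (hconv : ConvexOn ℝ Set.univ f)
    (hf : ∀ x, HasGradientAt f (f' x) x) (a b : E) :
    0 ≤ ⟪f' a - f' b, a - b⟫ := by
  set L : ℝ → E := fun t => b + t • (a - b) with hLdef
  have hLd : ∀ t : ℝ, HasDerivAt L (a - b) t := fun t => by
    simpa [hLdef] using ((hasDerivAt_id t).smul_const (a - b)).const_add b
  have hφ : ∀ t : ℝ, HasDerivAt (fun u => f (L u)) ⟪f' (L t), a - b⟫ t := fun t => by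
    have h1 := (hf (L t)).hasFDerivAt.comp_hasDerivAt t (hLd t)
    exact h1.congr_deriv (by simp [InnerProductSpace.toDual_apply_apply])
  have hconvφ : ConvexOn ℝ Set.univ (fun t : ℝ => f (L t)) := by
    have : (fun t : ℝ => f (L t)) = f ∘ (AffineMap.lineMap b a : ℝ →ᵃ[ℝ] E) := by
      funext t
      simp [hLdef, AffineMap.lineMap_apply, add_comm]
    rw [this]
    have := hconv.comp_affineMap (AffineMap.lineMap b a : ℝ →ᵃ[ℝ] E)
    simpa using this
  have hle1 : ⟪f' (L 0), a - b⟫ ≤ slope (fun u => f (L u)) 0 1 :=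
    hconvφ.le_slope_of_hasDerivAt (Set.mem_univ _) (Set.mem_univ _) one_pos (hφ 0)
  have hle2 : slope (fun u => f (L u)) 0 1 ≤ ⟪f' (L 1), a - b⟫ :=
    hconvφ.slope_le_of_hasDerivAt (Set.mem_univ _) (Set.mem_univ _) one_pos (hφ 1)
  have hL0 : L 0 = b := by simp [hLdef]
  have hL1 : L 1 = a := by simp [hLdef]
  have := hle1.trans hle2
  rw [hL0, hL1] at this
  rw [inner_sub_left]
  linarith

/-- Along solutions of the high-resolution ODE system of ADMM, the Lyapunov function
`E(t) = (1/2s)‖G(Y−y⋆)‖² + (s/2)‖Λ−λ⋆‖²` is nonincreasing on `[0, ∞)`. -/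
theorem admm_ode_lyapunov_nonincreasing
    {E1 E2 Em : Type*}
    [NormedAddCommGroup E1] [InnerProductSpace ℝ E1] [CompleteSpace E1]
    [NormedAddCommGroup E2] [InnerProductSpace ℝ E2] [CompleteSpace E2]
    [NormedAddCommGroup Em] [InnerProductSpace ℝ Em] [CompleteSpace Em]
    (f : E1 → ℝ) (g : E2 → ℝ) (f' : E1 → E1) (g' : E2 → E2)
    (F : E1 →L[ℝ] Em) (G : E2 →L[ℝ] Em) (h : Em) (s : ℝ) (hs : 0 < s)
    (hfconv : ConvexOn ℝ Set.univ f) (hgconv : ConvexOn ℝ Set.univ g)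
    (hf' : ∀ x, HasGradientAt f (f' x) x) (hg' : ∀ y, HasGradientAt g (g' y) y)
    (X : ℝ → E1) (Y : ℝ → E2) (Λ : ℝ → Em)
    (X' : ℝ → E1) (Y' : ℝ → E2) (Λ' : ℝ → Em)
    (hX : ∀ t, HasDerivAt X (X' t) t) (hY : ∀ t, HasDerivAt Y (Y' t) t)
    (hΛ : ∀ t, HasDerivAt Λ (Λ' t) t)
    (hodeX : ∀ t, adjoint F (G (Y' t)) = adjoint F (Λ t) + f' (X t))
    (hodeY : ∀ t, adjoint G (Λ t) + g' (Y t) = 0)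
    (hodeΛ : ∀ t, s ^ 2 • Λ' t = F (X t) + G (Y t) - h)
    (xstar : E1) (ystar : E2) (lstar : Em)
    (hsaddle : F xstar + G ystar = h)
    (hfstar : f' xstar = -adjoint F lstar) (hgstar : g' ystar = -adjoint G lstar)
    (hg'' : ∀ t, (inner ℝ (adjoint G (Λ' t)) (Y' t) : ℝ) ≤ 0) :
    AntitoneOn (fun t => (1 / (2 * s)) * ‖G (Y t) - G ystar‖ ^ 2
      + (s / 2) * ‖Λ t - lstar‖ ^ 2) (Set.Ici (0 : ℝ)) := by
  set E : ℝ → ℝ := fun t => (1 / (2 * s)) * ‖G (Y t) - G ystar‖ ^ 2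
      + (s / 2) * ‖Λ t - lstar‖ ^ 2 with hEdef
  -- derivative of E
  have hE : ∀ t, HasDerivAt E
      ((1 / s) * ⟪G (Y' t), G (Y t) - G ystar⟫ + s * ⟪Λ' t, Λ t - lstar⟫) t := by
    intro t
    have hu : HasDerivAt (fun t => G (Y t) - G ystar) (G (Y' t)) t :=
      ((G.hasFDerivAt.comp_hasDerivAt t (hY t))).sub_const _
    have hv : HasDerivAt (fun t => Λ t - lstar) (Λ' t) t := (hΛ t).sub_const _
    have h1 : HasDerivAt (fun t => ‖G (Y t) - G ystar‖ ^ 2)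
        (2 * ⟪G (Y' t), G (Y t) - G ystar⟫) t := by
      have := (HasDerivAt.inner ℝ hu hu)
      have heq : (fun t => ⟪G (Y t) - G ystar, G (Y t) - G ystar⟫)
          = fun t => ‖G (Y t) - G ystar‖ ^ 2 := by
        funext t; rw [real_inner_self_eq_norm_sq]
      rw [heq] at this
      exact this.congr_deriv (by rw [real_inner_comm]; ring)
    have h2 : HasDerivAt (fun t => ‖Λ t - lstar‖ ^ 2)
        (2 * ⟪Λ' t, Λ t - lstar⟫) t := by
      have := (HasDerivAt.inner ℝ hv hv)
      have heq : (fun t => ⟪Λ t - lstar, Λ t - lstar⟫)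
          = fun t => ‖Λ t - lstar‖ ^ 2 := by
        funext t; rw [real_inner_self_eq_norm_sq]
      rw [heq] at this
      exact this.congr_deriv (by rw [real_inner_comm]; ring)
    have := ((h1.const_mul (1 / (2 * s))).add (h2.const_mul (s / 2)))
    exact this.congr_deriv (by field_simp)
  -- the derivative is nonpositive
  have hE'le : ∀ t, (1 / s) * ⟪G (Y' t), G (Y t) - G ystar⟫ + s * ⟪Λ' t, Λ t - lstar⟫ ≤ 0 := by
    intro t
    -- monotonicity of gradients
    have hmf := grad_mono_of_convex hfconv hf' (X t) xstar
    have hmg := grad_mono_of_convex hgconv hg' (Y t) ystar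
    have hfX : f' (X t) = adjoint F (G (Y' t)) - adjoint F (Λ t) := by
      rw [hodeX t]; abel
    have hgY : g' (Y t) = -adjoint G (Λ t) := by
      have := hodeY t; linear_combination (norm := module) this
    rw [hfX, hfstar] at hmf
    rw [hgY, hgstar] at hmg
    have hmf' : 0 ≤ ⟪G (Y' t) - Λ t + lstar, F (X t - xstar)⟫ := by
      have : adjoint F (G (Y' t)) - adjoint F (Λ t) - -adjoint F lstar
          = adjoint F (G (Y' t) - Λ t + lstar) := by
        simp only [map_add, map_sub]; abel
      rw [this, adjoint_inner_left] at hmf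
      exact hmf
    have hmg' : ⟪Λ t - lstar, G (Y t - ystar)⟫ ≤ 0 := by
      have : -adjoint G (Λ t) - -adjoint G lstar = -(adjoint G (Λ t - lstar)) := by
        simp only [map_sub, neg_sub]; abel
      rw [this, inner_neg_left, adjoint_inner_left] at hmg
      linarith
    have h3 : ⟪Λ' t, G (Y' t)⟫ ≤ 0 := by
      have := hg'' t
      rwa [adjoint_inner_left] at this
    -- rewrite s * ⟪Λ', Λ - λ⋆⟫
    have hode := hodeΛ t
    have hsplit : F (X t) + G (Y t) - h = F (X t - xstar) + G (Y t - ystar) := by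
      rw [← hsaddle, map_sub, map_sub]; abel
    have hL' : s ^ 2 • Λ' t = F (X t - xstar) + G (Y t - ystar) := by
      rw [hode, hsplit]
    -- key scalar identities
    have e1 : s * ⟪Λ' t, Λ t - lstar⟫
        = (1 / s) * (⟪F (X t - xstar), Λ t - lstar⟫ + ⟪G (Y t - ystar), Λ t - lstar⟫) := by
      have : ⟪s ^ 2 • Λ' t, Λ t - lstar⟫
          = ⟪F (X t - xstar), Λ t - lstar⟫ + ⟪G (Y t - ystar), Λ t - lstar⟫ := by
        rw [hL', inner_add_left]
      rw [real_inner_smul_left] at this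
      rw [← this]
      field_simp
    have e2 : ⟪G (Y' t), F (X t - xstar) + G (Y t - ystar)⟫ = s ^ 2 * ⟪Λ' t, G (Y' t)⟫ := by
      rw [← hL', real_inner_smul_right, real_inner_comm]
    have e2' : ⟪G (Y' t), F (X t - xstar)⟫ + ⟪G (Y' t), G (Y t) - G ystar⟫
        = s ^ 2 * ⟪Λ' t, G (Y' t)⟫ := by
      rw [← e2]; simp only [inner_add_right, map_sub]
    have hmf'' : ⟪F (X t - xstar), Λ t - lstar⟫ ≤ ⟪G (Y' t), F (X t - xstar)⟫ := by
      have : ⟪G (Y' t) - Λ t + lstar, F (X t - xstar)⟫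
          = ⟪G (Y' t), F (X t - xstar)⟫ - ⟪Λ t - lstar, F (X t - xstar)⟫ := by
        rw [show G (Y' t) - Λ t + lstar = G (Y' t) - (Λ t - lstar) by abel, inner_sub_left]
      rw [this] at hmf'
      rw [real_inner_comm]
      linarith
    have hmg'' : ⟪G (Y t - ystar), Λ t - lstar⟫ ≤ 0 := by
      rw [real_inner_comm]; exact hmg'
    have hGsub : ⟪G (Y t - ystar), Λ t - lstar⟫ = ⟪G (Y t) - G ystar, Λ t - lstar⟫ := by
      rw [map_sub]
    rw [e1]
    have hsinv : 0 < 1 / s := by positivity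
    have key : ⟪G (Y' t), G (Y t) - G ystar⟫ + ⟪F (X t - xstar), Λ t - lstar⟫
        + ⟪G (Y t - ystar), Λ t - lstar⟫ ≤ 0 := by
      nlinarith [hmf'', hmg'', e2', h3, sq_nonneg s]
    have : (1 / s) * ⟪G (Y' t), G (Y t) - G ystar⟫
        + (1 / s) * (⟪F (X t - xstar), Λ t - lstar⟫ + ⟪G (Y t - ystar), Λ t - lstar⟫)
        = (1 / s) * (⟪G (Y' t), G (Y t) - G ystar⟫ + ⟪F (X t - xstar), Λ t - lstar⟫
          + ⟪G (Y t - ystar), Λ t - lstar⟫) := by ring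
    rw [this]
    exact mul_nonpos_of_nonneg_of_nonpos hsinv.le key
  -- conclude antitone
  have hcont : ContinuousOn E (Set.Ici (0 : ℝ)) := fun t _ =>
    (hE t).continuousAt.continuousWithinAt
  have hdiff : DifferentiableOn ℝ E (interior (Set.Ici (0 : ℝ))) := fun t _ =>
    (hE t).differentiableAt.differentiableWithinAt
  exact antitoneOn_of_deriv_nonpos (convex_Ici 0) hcont hdiff fun t _ => by
    rw [(hE t).deriv]; exact hE'le t
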